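/- Let G = (V, E) be a finite connected simple graph with n vertices and let 1 ≤ d ≤ n. Let H^(d) be the set of all d-element subsets S of V whose induced subgraph G[S] is connected, and let G^(d) be the graph on vertex set H^(d) in which two distinct subsets S, S′ ∈ H^(d) are adjacent if and only if |S ∩ S′| = d − 1. Then G^(d) is connected. -/

import Mathlib

open Finset
set_option linter.unusedSectionVars false
namespace SubgraphRel
variable {V : Type*} [Fintype V] [DecidableEq V] {G : SimpleGraph V}

/-- Connectivity of the induced subgraph on a finset. -/
abbrev Conn (G : SimpleGraph V) (S : Finset V) : Prop := (G.induce (↑S : Set V)).Connected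

lemma conn_singleton_set (G : SimpleGraph V) (v : V) : (G.induce ({v} : Set V)).Connected := by
  have hne : Nonempty (({v} : Set V)) := ⟨⟨v, rfl⟩⟩
  refine SimpleGraph.Connected.mk fun a b => ?_
  have : a = b := Subtype.ext (by
    have ha := a.2; have hb := b.2
    simp only [Set.mem_singleton_iff] at ha hb
    rw [ha, hb])
  rw [this]

lemma conn_singleton (G : SimpleGraph V) (v : V) : Conn G {v} := by
  show (G.induce _).Connected
  rw [Finset.coe_singleton]
  exact conn_singleton_set G v

lemma conn_grow {S : Finset V} (hS : Conn G S) {a v : V} (ha : a ∈ S) (hadj : G.Adj a v) :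
    Conn G (insert v S) := by
  have h := SimpleGraph.connected_induce_union (G := G) (s := (↑S : Set V))
    (t := {v}) hS.preconnected (conn_singleton_set G v).preconnected (by exact ha) rfl hadj
  show (G.induce _).Connected
  rw [Finset.coe_insert, Set.insert_eq, Set.union_comm]
  exact h

/-- The hom from an induced subgraph into the ambient graph. -/
def induceVal (G : SimpleGraph V) (s : Set V) : G.induce s →g G := ⟨Subtype.val, fun h => h⟩

lemma conn_walk {S : Finset V} (hS : Conn G S) {u v : V} (hu : u ∈ S) (hv : v ∈ S) :
    ∃ p : G.Walk u v, ∀ x ∈ p.support, x ∈ S := by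
  rw [Conn, SimpleGraph.connected_induce_iff,
    SimpleGraph.Subgraph.connected_iff_forall_exists_walk_subgraph] at hS
  obtain ⟨p, hp⟩ := hS.2 (by exact hu) (by exact hv)
  refine ⟨p, fun x hx => ?_⟩
  have := hp.1
  simp only [SimpleGraph.Walk.verts_toSubgraph, SimpleGraph.Subgraph.induce_verts] at this
  exact this hx

lemma conn_of_walks {S : Finset V} {u : V} (hu : u ∈ S)
    (h : ∀ v ∈ S, ∃ p : G.Walk u v, ∀ x ∈ p.support, x ∈ S) : Conn G S := by
  apply SimpleGraph.induce_connected_of_patches u (by exact hu)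
  intro v hv
  obtain ⟨p, hp⟩ := h v hv
  refine ⟨{x | x ∈ p.support}, fun x hx => hp x hx, p.start_mem_support, p.end_mem_support, ?_⟩
  exact (p.connected_induce_support).preconnected _ _

/-- every vertex of a connected set of size ≥ 2 has a neighbour inside the set -/
lemma conn_neighbor {S : Finset V} (hS : Conn G S) {x : V} (hx : x ∈ S) (h2 : 1 < S.card) :
    ∃ a ∈ S, G.Adj x a := by
  obtain ⟨b, hb, hbx⟩ := Finset.exists_mem_ne h2 x
  obtain ⟨p, hp⟩ := conn_walk hS hx hb
  cases p with
  | nil => exact absurd rfl hbx.symm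
  | cons h q => exact ⟨_, hp _ (by simp [SimpleGraph.Walk.support_cons]), h⟩

/-- crossing edge out of a walk -/
lemma crossing {S : Finset V} {y z : V} (hy : y ∉ S) (hz : z ∉ S) :
    ∀ {a b : V} (p : G.Walk a b), (∀ x ∈ p.support, x ∈ S ∨ x = y ∨ x = z) →
      (a = y ∨ a = z) → b ∈ S → ∃ c v, (c = y ∨ c = z) ∧ v ∈ S ∧ G.Adj c v := by
  intro a b p
  induction p with
  | nil =>
    intro _ ha hb
    rcases ha with rfl | rfl
    · exact absurd hb hy
    · exact absurd hb hz
  | @cons a a₂ b h q ih =>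
    intro hsup ha hb
    by_cases h2 : a₂ ∈ S
    · exact ⟨a, a₂, ha, h2, h⟩
    · have ha₂ : a₂ = y ∨ a₂ = z := by
        have := hsup a₂ (by simp [SimpleGraph.Walk.support_cons])
        tauto
      exact ih (fun x hx => hsup x (by simp [SimpleGraph.Walk.support_cons, hx])) ha₂ hb

/-- a nonempty proper subset has an edge leaving it (in a connected graph) -/
lemma exists_boundary (hconn : G.Connected) {S : Finset V} (hne : S.Nonempty)
    (hproper : S ≠ univ) : ∃ a ∈ S, ∃ b, b ∉ S ∧ G.Adj a b := by
  obtain ⟨a, ha⟩ := hne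
  have : ∃ b, b ∉ S := by
    by_contra h
    push_neg at h
    exact hproper (Finset.eq_univ_iff_forall.mpr h)
  obtain ⟨b, hb⟩ := this
  obtain ⟨p⟩ := hconn a b
  clear hproper
  induction p with
  | nil => exact absurd ha hb
  | @cons a a₂ b h q ih =>
    by_cases h2 : a₂ ∈ S
    · exact ih h2 hb
    · exact ⟨a, ha, a₂, h2, h⟩

/-- shrink: we can remove some vertex ≠ r keeping connectivity -/
lemma conn_shrink {S : Finset V} (hS : Conn G S) {r : V} (hr : r ∈ S) (h2 : 2 ≤ S.card) :
    ∃ u ∈ S, u ≠ r ∧ Conn G (S.erase u) := by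
  classical
  set H := G.induce (↑S : Set V) with hH
  have hHconn : H.Connected := hS
  have hrr : r ∈ (↑S : Set V) := hr
  set r' : (↑S : Set V) := ⟨r, hrr⟩ with hr'
  -- pick u' maximizing distance from r'
  obtain ⟨u', -, hmax⟩ := Finset.exists_max_image S.attach
    (fun x => H.dist r' ⟨x.1, x.2⟩) ⟨⟨r, hr⟩, Finset.mem_attach _ _⟩
  set u : V := u'.1 with hu
  have hudist : ∀ x : {a // a ∈ S}, H.dist r' ⟨x.1, x.2⟩ ≤ H.dist r' ⟨u, u'.2⟩ :=
    fun x => hmax x (Finset.mem_attach _ _)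
  -- u ≠ r
  obtain ⟨b, hb, hbr⟩ := Finset.exists_mem_ne h2 r
  have hbpos : 0 < H.dist r' ⟨b, hb⟩ :=
    hHconn.pos_dist_of_ne (fun hc => hbr (congrArg Subtype.val hc).symm)
  have hupos : 0 < H.dist r' ⟨u, u'.2⟩ := lt_of_lt_of_le hbpos (hudist ⟨b, hb⟩)
  have hur : u ≠ r := by
    intro hc
    rw [show (⟨u, u'.2⟩ : (↑S : Set V)) = r' from Subtype.ext hc] at hupos
    simp [SimpleGraph.dist_self] at hupos
  refine ⟨u, u'.2, hur, ?_⟩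
  have hrerase : r ∈ S.erase u := Finset.mem_erase.mpr ⟨hur.symm, hr⟩
  apply conn_of_walks hrerase
  intro v hv
  obtain ⟨hvu, hvS⟩ := Finset.mem_erase.mp hv
  -- shortest H-walk from r' to v'
  obtain ⟨q, hq⟩ := hHconn.exists_walk_length_eq_dist r' ⟨v, hvS⟩
  have hunotin : (⟨u, u'.2⟩ : (↑S : Set V)) ∉ q.support := by
    intro hmem
    have h1 : H.dist r' ⟨u, u'.2⟩ ≤ (q.takeUntil _ hmem).length := SimpleGraph.dist_le _
    have h2' : H.dist ⟨u, u'.2⟩ ⟨v, hvS⟩ ≤ (q.dropUntil _ hmem).length := SimpleGraph.dist_le _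
    have h3 : (q.takeUntil _ hmem).length + (q.dropUntil _ hmem).length = q.length := by
      rw [← SimpleGraph.Walk.length_append, SimpleGraph.Walk.take_spec]
    have h4 : 0 < H.dist ⟨u, u'.2⟩ ⟨v, hvS⟩ :=
      hHconn.pos_dist_of_ne (fun hc => hvu (congrArg Subtype.val hc).symm)
    have h5 : H.dist r' ⟨v, hvS⟩ ≤ H.dist r' ⟨u, u'.2⟩ := hudist ⟨v, hvS⟩
    omega
  -- map down to G
  refine ⟨q.map (induceVal G (↑S : Set V)), fun x hx => ?_⟩
  replace hx : x ∈ q.support.map (induceVal G (↑S : Set V)) := by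
    rw [← SimpleGraph.Walk.support_map]; exact hx
  rw [List.mem_map] at hx
  obtain ⟨x', hx', rfl⟩ := hx
  refine Finset.mem_erase.mpr ⟨?_, x'.2⟩
  intro hc
  exact hunotin (by rwa [show x' = (⟨u, u'.2⟩ : (↑S : Set V)) from Subtype.ext hc] at hx')

/-- the vertex type of the `d`-node subgraph relationship graph -/
abbrev HSet (G : SimpleGraph V) (d : ℕ) :=
  {S : Finset V // S.card = d ∧ (G.induce (↑S : Set V)).Connected}

/-- the `d`-node subgraph relationship graph -/
abbrev Gd (G : SimpleGraph V) (d : ℕ) : SimpleGraph (HSet G d) :=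
  SimpleGraph.fromRel (fun A B => ((A : Finset V) ∩ (B : Finset V)).card = d - 1)

lemma reach_of_inter {d : ℕ} (T B : HSet G d)
    (h : d - 1 ≤ ((T : Finset V) ∩ (B : Finset V)).card) : (Gd G d).Reachable T B := by
  by_cases heq : T = B
  · rw [heq]
  · have hTB : (T : Finset V) ≠ (B : Finset V) := fun hc => heq (Subtype.ext hc)
    have hle : ((T : Finset V) ∩ (B : Finset V)).card ≤ d := by
      calc ((T : Finset V) ∩ (B : Finset V)).card ≤ (T : Finset V).card :=
            Finset.card_le_card Finset.inter_subset_left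
        _ = d := T.2.1
    have hne : ((T : Finset V) ∩ (B : Finset V)).card ≠ d := by
      intro hc
      have h1 : (T : Finset V) ∩ (B : Finset V) = (T : Finset V) :=
        Finset.eq_of_subset_of_card_le Finset.inter_subset_left (by rw [hc, T.2.1])
      have h2 : (T : Finset V) ⊆ (B : Finset V) := by
        rw [← h1]; exact Finset.inter_subset_right
      exact hTB (Finset.eq_of_subset_of_card_le h2 (by rw [T.2.1, B.2.1]))
    have : ((T : Finset V) ∩ (B : Finset V)).card = d - 1 := by omega
    exact (SimpleGraph.Adj.reachable (by rw [SimpleGraph.fromRel_adj]; exact ⟨heq, Or.inl this⟩))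

/-- existence of connected sets of each size -/
lemma exists_conn (hconn : G.Connected) : ∀ d, 1 ≤ d → d ≤ Fintype.card V →
    ∃ S : Finset V, S.card = d ∧ Conn G S := by
  intro d
  induction d with
  | zero => omega
  | succ k ih =>
    intro _ hdn
    rcases Nat.eq_zero_or_pos k with rfl | hk
    · obtain ⟨v⟩ := hconn.nonempty
      exact ⟨{v}, Finset.card_singleton v, conn_singleton G v⟩
    · obtain ⟨S, hcard, hS⟩ := ih hk (by omega)
      have hne : S.Nonempty := Finset.card_pos.mp (by omega)
      have hproper : S ≠ univ := by
        intro hc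
        rw [hc, Finset.card_univ] at hcard
        omega
      obtain ⟨a, ha, b, hb, hadj⟩ := exists_boundary hconn hne hproper
      exact ⟨insert b S, by rw [Finset.card_insert_of_notMem hb, hcard],
        conn_grow hS ha hadj⟩

/-- sliding a pair along a walk -/
lemma pair_reach : ∀ {a x : V} (_ : G.Walk a x) (T : HSet G 2), a ∈ (T : Finset V) →
    ∃ T' : HSet G 2, x ∈ (T' : Finset V) ∧ (Gd G 2).Reachable T T' := by
  intro a x p
  induction p with
  | nil => exact fun T ha => ⟨T, ha, SimpleGraph.Reachable.refl T⟩
  | @cons a a₂ x h q ih =>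
    intro T ha
    by_cases h2 : a₂ ∈ (T : Finset V)
    · exact ih T h2
    · have hcard : ({a, a₂} : Finset V).card = 2 := Finset.card_pair h.ne
      have hconn2 : Conn G {a, a₂} := by
        show (G.induce _).Connected
        rw [Finset.coe_insert, Finset.coe_singleton]
        exact SimpleGraph.induce_pair_connected_of_adj h
      set T₁ : HSet G 2 := ⟨{a, a₂}, hcard, hconn2⟩ with hT₁
      have hstep : (Gd G 2).Reachable T T₁ := by
        apply reach_of_inter
        have : a ∈ (T : Finset V) ∩ ({a, a₂} : Finset V) :=
          Finset.mem_inter.mpr ⟨ha, by simp⟩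
        have := Finset.card_pos.mpr ⟨a, this⟩
        show 2 - 1 ≤ ((T : Finset V) ∩ ({a, a₂} : Finset V)).card
        omega
      obtain ⟨T', hx, hreach⟩ := ih T₁ (by simp [hT₁])
      exact ⟨T', hx, hstep.trans hreach⟩
/-- lifting a walk at level `k` to level `k+1` -/
lemma lift {k : ℕ} (hk : 2 ≤ k) :
    ∀ {S S' : HSet G k} (_ : (Gd G k).Walk S S') (T : HSet G (k+1)),
      (S : Finset V) ⊆ (T : Finset V) →
      ∃ T' : HSet G (k+1), (S' : Finset V) ⊆ (T' : Finset V) ∧ (Gd G (k+1)).Reachable T T' := by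
  intro S S' W
  induction W with
  | nil => exact fun T hST => ⟨T, hST, SimpleGraph.Reachable.refl T⟩
  | @cons S S₁ S' hadj q ih =>
    intro T hST
    rw [SimpleGraph.fromRel_adj] at hadj
    obtain ⟨hne, hrel⟩ := hadj
    have hcard : ((S : Finset V) ∩ (S₁ : Finset V)).card = k - 1 := by
      rcases hrel with h | h
      · exact h
      · rwa [Finset.inter_comm] at h
    have hSk : (S : Finset V).card = k := S.2.1
    have hS₁k : (S₁ : Finset V).card = k := S₁.2.1
    have hsd : ((S₁ : Finset V) \ (S : Finset V)).card = 1 := by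
      have h := Finset.card_sdiff_add_card_inter (S₁ : Finset V) (S : Finset V)
      rw [Finset.inter_comm] at h
      omega
    obtain ⟨x, hx⟩ := Finset.card_eq_one.mp hsd
    have hxmem : x ∈ (S₁ : Finset V) \ (S : Finset V) := by rw [hx]; exact Finset.mem_singleton_self x
    have hxS₁ : x ∈ (S₁ : Finset V) := (Finset.mem_sdiff.mp hxmem).1
    have hxS : x ∉ (S : Finset V) := (Finset.mem_sdiff.mp hxmem).2
    have hS₁sub : ∀ v ∈ (S₁ : Finset V), v = x ∨ v ∈ (S : Finset V) := by
      intro v hv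
      by_cases hvx : v = x
      · exact Or.inl hvx
      · refine Or.inr ?_
        by_contra hvS
        have : v ∈ (S₁ : Finset V) \ (S : Finset V) := Finset.mem_sdiff.mpr ⟨hv, hvS⟩
        rw [hx, Finset.mem_singleton] at this
        exact hvx this
    by_cases hxT : x ∈ (T : Finset V)
    · refine ih T (fun v hv => ?_)
      rcases hS₁sub v hv with rfl | hvS
      · exact hxT
      · exact hST hvS
    · -- grow T by x
      obtain ⟨a, haS₁, hxa⟩ := conn_neighbor S₁.2.2 hxS₁ (by omega)
      have haS : a ∈ (S : Finset V) := by
        rcases hS₁sub a haS₁ with rfl | h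
        · exact absurd rfl hxa.ne
        · exact h
      have haT : a ∈ (T : Finset V) := hST haS
      have hWconn : Conn G (insert x (T : Finset V)) := conn_grow T.2.2 haT hxa.symm
      have hWcard : (insert x (T : Finset V)).card = k + 2 := by
        rw [Finset.card_insert_of_notMem hxT, T.2.1]
      have hS₁W : (S₁ : Finset V) ⊆ insert x (T : Finset V) := by
        intro v hv
        rcases hS₁sub v hv with rfl | hvS
        · exact Finset.mem_insert_self _ _
        · exact Finset.mem_insert_of_mem (hST hvS)
      have hsd2 : ((insert x (T : Finset V)) \ (S₁ : Finset V)).card = 2 := by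
        rw [Finset.card_sdiff_of_subset hS₁W, hWcard, hS₁k]; omega
      obtain ⟨y, z, hyzne, hyz⟩ := Finset.card_eq_two.mp hsd2
      have hymem : y ∈ (insert x (T : Finset V)) \ (S₁ : Finset V) := by
        rw [hyz]; exact Finset.mem_insert_self _ _
      have hzmem : z ∈ (insert x (T : Finset V)) \ (S₁ : Finset V) := by
        rw [hyz]; exact Finset.mem_insert_of_mem (Finset.mem_singleton_self z)
      obtain ⟨p, hp⟩ := conn_walk hWconn (Finset.mem_sdiff.mp hymem).1 (Finset.mem_insert_self x _)
      have hcross := crossing (S := S₁.val) (Finset.mem_sdiff.mp hymem).2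
        (Finset.mem_sdiff.mp hzmem).2 p
        (fun v hv => by
          by_cases hvS₁ : v ∈ (S₁ : Finset V)
          · exact Or.inl hvS₁
          · have : v ∈ (insert x (T : Finset V)) \ (S₁ : Finset V) :=
              Finset.mem_sdiff.mpr ⟨hp v hv, hvS₁⟩
            rw [hyz, Finset.mem_insert, Finset.mem_singleton] at this
            exact Or.inr this)
        (Or.inl rfl) hxS₁
      obtain ⟨c, v₀, hcyz, hv₀S₁, hcv₀⟩ := hcross
      have hcmem : c ∈ (insert x (T : Finset V)) \ (S₁ : Finset V) := by
        rw [hyz]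
        rcases hcyz with rfl | rfl
        · exact Finset.mem_insert_self _ _
        · exact Finset.mem_insert_of_mem (Finset.mem_singleton_self c)
      have hcS₁ : c ∉ (S₁ : Finset V) := (Finset.mem_sdiff.mp hcmem).2
      have hcT : c ∈ (T : Finset V) := by
        rcases Finset.mem_insert.mp (Finset.mem_sdiff.mp hcmem).1 with rfl | h
        · exact absurd hxS₁ hcS₁
        · exact h
      refine ?_
      set T₁ : HSet G (k+1) := ⟨insert c (S₁ : Finset V),
        by rw [Finset.card_insert_of_notMem hcS₁, hS₁k],
        conn_grow S₁.2.2 hv₀S₁ hcv₀.symm⟩ with hT₁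
      have hstep : (Gd G (k+1)).Reachable T T₁ := by
        apply reach_of_inter
        have hsub : insert c ((S : Finset V) ∩ (S₁ : Finset V)) ⊆
            (T : Finset V) ∩ (T₁ : Finset V) := by
          rw [Finset.insert_subset_iff]
          refine ⟨Finset.mem_inter.mpr ⟨hcT, Finset.mem_insert_self _ _⟩, ?_⟩
          intro v hv
          exact Finset.mem_inter.mpr ⟨hST (Finset.mem_inter.mp hv).1,
            Finset.mem_insert_of_mem (Finset.mem_inter.mp hv).2⟩
        have hc1 : (insert c ((S : Finset V) ∩ (S₁ : Finset V))).card = k := by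
          rw [Finset.card_insert_of_notMem (fun hc => hcS₁ (Finset.mem_inter.mp hc).2), hcard]
          omega
        have := Finset.card_le_card hsub
        show k + 1 - 1 ≤ ((T : Finset V) ∩ (T₁ : Finset V)).card
        omega
      obtain ⟨T'', hsub'', hreach''⟩ := ih T₁ (Finset.subset_insert _ _)
      exact ⟨T'', hsub'', hstep.trans hreach''⟩
theorem main (hconn : G.Connected) : ∀ d, 1 ≤ d → d ≤ Fintype.card V →
    (Gd G d).Connected := by
  intro d
  induction d with
  | zero => omega
  | succ k ih =>
    intro hd1 hdn
    rw [SimpleGraph.connected_iff]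
    constructor
    · intro A B
      rcases Nat.eq_zero_or_pos k with rfl | hk
      · -- d = 1 : complete graph
        exact reach_of_inter A B (by omega)
      rcases eq_or_lt_of_le (Nat.succ_le_of_lt hk) with hk1 | hk2
      · -- d = 2
        subst hk1  -- maybe wrong direction; handle below
        obtain ⟨a, ha⟩ := Finset.card_pos.mp (by rw [A.2.1]; omega)
        obtain ⟨b, hb⟩ := Finset.card_pos.mp (by rw [B.2.1]; omega)
        obtain ⟨p⟩ := hconn a b
        obtain ⟨T', hbT', hreach⟩ := pair_reach p A ha
        refine hreach.trans (reach_of_inter T' B ?_)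
        have : b ∈ (T' : Finset V) ∩ (B : Finset V) := Finset.mem_inter.mpr ⟨hbT', hb⟩
        have := Finset.card_pos.mpr ⟨b, this⟩
        omega
      · -- d = k+1, k ≥ 2
        obtain ⟨rA, hrA⟩ := Finset.card_pos.mp (by rw [A.2.1]; omega)
        obtain ⟨rB, hrB⟩ := Finset.card_pos.mp (by rw [B.2.1]; omega)
        obtain ⟨u, huA, -, huconn⟩ := conn_shrink A.2.2 hrA (by rw [A.2.1]; omega)
        obtain ⟨w, hwB, -, hwconn⟩ := conn_shrink B.2.2 hrB (by rw [B.2.1]; omega)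
        have hSAcard : ((A : Finset V).erase u).card = k := by
          rw [Finset.card_erase_of_mem huA, A.2.1]; omega
        have hSBcard : ((B : Finset V).erase w).card = k := by
          rw [Finset.card_erase_of_mem hwB, B.2.1]; omega
        set SA : HSet G k := ⟨(A : Finset V).erase u, hSAcard, huconn⟩
        set SB : HSet G k := ⟨(B : Finset V).erase w, hSBcard, hwconn⟩
        have hkconn := ih hk (by omega)
        obtain ⟨W⟩ := hkconn.preconnected SA SB
        obtain ⟨T', hsubT', hreach⟩ := lift hk2 W A (Finset.erase_subset _ _)
        refine hreach.trans (reach_of_inter T' B ?_)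
        have hsub : (B : Finset V).erase w ⊆ (T' : Finset V) ∩ (B : Finset V) :=
          fun v hv => Finset.mem_inter.mpr ⟨hsubT' hv, Finset.erase_subset _ _ hv⟩
        have := Finset.card_le_card hsub
        omega
    · obtain ⟨S, h1, h2⟩ := exists_conn hconn (k+1) hd1 hdn
      exact ⟨⟨S, h1, h2⟩⟩
end SubgraphRel

/-- let `G` be a finite connected simple graph on `n` vertices and
`1 ≤ d ≤ n`.  Let `H⁽ᵈ⁾` be the collection of `d`-element vertex subsets inducing a
connected subgraph, and let `G⁽ᵈ⁾` be the graph on `H⁽ᵈ⁾` where two distinct subsets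
are adjacent iff they share exactly `d − 1` common vertices.  Then `G⁽ᵈ⁾` is
connected. -/
theorem subgraph_relationship_graph_connected
    {V : Type*} [Fintype V] [DecidableEq V] (G : SimpleGraph V)
    (hconn : G.Connected) (d : ℕ) (hd1 : 1 ≤ d) (hdn : d ≤ Fintype.card V) :
    (SimpleGraph.fromRel
      (fun A B : {S : Finset V // S.card = d ∧ (G.induce (↑S : Set V)).Connected} =>
        ((A : Finset V) ∩ (B : Finset V)).card = d - 1)).Connected :=
  SubgraphRel.main hconn d hd1 hdn
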